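/- Let q_o > q_s > 0, γ_o > 0, γ_s > 0, η = γ_o + γ_s, and suppose condition C1 holds: η q_s/(2 q_o) < γ_o < η/2. Define p_o* = 2 γ_o γ_s q_o (q_o − q_s)/(4 γ_o γ_s q_o − η² q_s) and p_s* = η γ_o q_s (q_o − q_s)/(4 γ_o γ_s q_o − η² q_s). Then p_s* = (γ_o/(γ_o + γ_s)) (2 p_o* − q_o + q_s) and p_o* = 2 γ_s q_o p_s*/((γ_o + γ_s) q_s); i.e. (p_o*, p_s*) simultaneously solves both first-order conditions ∂π/∂p_o = 0 and ∂π/∂p_s = 0 of the revenue function π(p_o, p_s) = γ_o p_o (1 − (p_o − p_s)/(q_o − q_s)) + γ_s p_s ((p_o − p_s)/(q_o − q_s) − p_s/q_s). -/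

import Mathlib

/-- Under C1, the equilibrium prices
`p_o* = 2 γ_o γ_s q_o (q_o − q_s)/(4 γ_o γ_s q_o − η² q_s)` and
`p_s* = η γ_o q_s (q_o − q_s)/(4 γ_o γ_s q_o − η² q_s)` satisfy
`p_s* = (γ_o/(γ_o + γ_s)) (2 p_o* − q_o + q_s)` and
`p_o* = 2 γ_s q_o p_s*/((γ_o + γ_s) q_s)`, i.e. they simultaneously solve both
first-order conditions `∂π/∂p_o = 0` and `∂π/∂p_s = 0` of the revenue
`π(p_o, p_s) = γ_o p_o (1 − (p_o − p_s)/(q_o − q_s)) + γ_s p_s ((p_o − p_s)/(q_o − q_s) − p_s/q_s)`. -/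
theorem equilibrium_first_order_conditions
    (qo qs γo γs η po ps : ℝ)
    (hq : qo > qs) (hqs : qs > 0)
    (hγo : 0 < γo) (hγs : 0 < γs)
    (hη : η = γo + γs)
    (hC1l : η * qs / (2 * qo) < γo) (hC1r : γo < η / 2)
    (hpo : po = 2 * γo * γs * qo * (qo - qs) / (4 * γo * γs * qo - η ^ 2 * qs))
    (hps : ps = η * γo * qs * (qo - qs) / (4 * γo * γs * qo - η ^ 2 * qs)) :
    ps = γo / (γo + γs) * (2 * po - qo + qs) ∧
    po = 2 * γs * qo * ps / ((γo + γs) * qs) ∧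
    HasDerivAt (fun p : ℝ =>
        γo * p * (1 - (p - ps) / (qo - qs)) +
          γs * ps * ((p - ps) / (qo - qs) - ps / qs)) 0 po ∧
    HasDerivAt (fun p : ℝ =>
        γo * po * (1 - (po - p) / (qo - qs)) +
          γs * p * ((po - p) / (qo - qs) - p / qs)) 0 ps := by
  subst hη
  have hqo : (0:ℝ) < qo := lt_trans hqs hq
  have hA : qo - qs ≠ 0 := sub_ne_zero.mpr (ne_of_gt hq)
  have hqs' : qs ≠ 0 := ne_of_gt hqs
  have hηs : γo + γs ≠ 0 := by positivity
  have hD : 0 < 4 * γo * γs * qo - (γo + γs) ^ 2 * qs := by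
    have h1 : (γo + γs) * qs < 2 * γo * qo := by
      have := (div_lt_iff₀ (by positivity : (0:ℝ) < 2 * qo)).mp hC1l
      linarith
    have h2 : γo + γs < 2 * γs := by
      have := (lt_div_iff₀ (by norm_num : (0:ℝ) < 2)).mp hC1r; linarith
    nlinarith [mul_pos (by positivity : (0:ℝ) < γo + γs) hqs]
  have hD' : 4 * γo * γs * qo - (γo + γs) ^ 2 * qs ≠ 0 := ne_of_gt hD
  have h1 : ps = γo / (γo + γs) * (2 * po - qo + qs) := by
    rw [hpo, hps]; field_simp [show γo * γs * qo * 4 - (γo + γs) ^ 2 * qs ≠ 0 by convert hD' using 2; ring]; ring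
  have h2 : po = 2 * γs * qo * ps / ((γo + γs) * qs) := by
    rw [hpo, hps]; field_simp
  have h1' : (γo + γs) * ps = γo * (2 * po - qo + qs) := by
    rw [h1]; field_simp
  have h2' : (γo + γs) * qs * po = 2 * γs * qo * ps := by
    rw [h2]; field_simp
  refine ⟨h1, h2, ?_, ?_⟩
  · have hid : HasDerivAt (fun p : ℝ => p) 1 po := hasDerivAt_id po
    have hd := (((hid.const_mul γo).mul
        ((hasDerivAt_const po (1:ℝ)).sub ((hid.sub_const ps).div_const (qo - qs)))).add
        ((((hid.sub_const ps).div_const (qo - qs)).sub_const (ps / qs)).const_mul (γs * ps)))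
    refine hd.congr_deriv (Eq.symm ?_); simp only [Pi.sub_apply]
    field_simp
    ring_nf
    linear_combination (-1 : ℝ) * h1'
  · have hid : HasDerivAt (fun p : ℝ => p) 1 ps := hasDerivAt_id ps
    have hd := (((hasDerivAt_const ps (γo * po)).mul
        ((hasDerivAt_const ps (1:ℝ)).sub (((hasDerivAt_const ps po).sub hid).div_const (qo - qs)))).add
        ((hid.const_mul γs).mul
          ((((hasDerivAt_const ps po).sub hid).div_const (qo - qs)).sub (hid.div_const qs))))
    refine hd.congr_deriv (Eq.symm ?_); simp only [Pi.sub_apply]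
    field_simp
    ring_nf
    linear_combination (-1 : ℝ) * h2'
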